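/- Suppose S = (1/n) Γ' X' X Γ is invertible, and define the population NIECE estimator β̂^N(ω) = Γ (Γ' X' X Γ)^{-1} Γ' X' Y(ω). Then β̂^N is unbiased, 𝔼[β̂^N] = β*, and its prediction risk equals 𝔼[ tr( (β̂^N − β*)' Σ_x (β̂^N − β*) ) ] = (1/n) · tr(Σ_ε) · tr( S^{-1} ). -/

import Mathlib

open Matrix MeasureTheory

theorem population_niece_unbiased_and_risk
    (n p u q : ℕ) (hn : 0 < n) (hp : 0 < p) (hu : 0 < u) (hq : 0 < q)
    (Γ : Matrix (Fin p) (Fin u) ℝ) (hΓ : Γᵀ * Γ = 1)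
    (Sx : Matrix (Fin p) (Fin p) ℝ) (hSx : Sx.IsSymm) (hSxΓ : Sx * Γ = Γ)
    (β : Matrix (Fin p) (Fin q) ℝ) (hβ : β = Γ * Γᵀ * β)
    (X : Matrix (Fin n) (Fin p) ℝ)
    (S : Matrix (Fin u) (Fin u) ℝ) (hS : S = ((n : ℝ)⁻¹) • (Γᵀ * Xᵀ * X * Γ))
    (hSinv : IsUnit S.det)
    (Se : Matrix (Fin q) (Fin q) ℝ) (hSe : Se.PosSemidef)
    -- probability space and mean-zero noise with Var(vec E) = Σ_ε ⊗ I_n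
    {Ω : Type*} [MeasurableSpace Ω] (P : Measure Ω) [IsProbabilityMeasure P]
    (E : Ω → Matrix (Fin n) (Fin q) ℝ)
    (hL2 : ∀ i k, MemLp (fun ω => E ω i k) 2 P)
    (hmean : ∀ i k, ∫ ω, E ω i k ∂P = 0)
    (hcov : ∀ i j k l, ∫ ω, E ω i k * E ω j l ∂P = (if i = j then (1:ℝ) else 0) * Se k l)
    (Y : Ω → Matrix (Fin n) (Fin q) ℝ) (hY : ∀ ω, Y ω = X * β + E ω)
    -- the population NIECE estimator
    (βN : Ω → Matrix (Fin p) (Fin q) ℝ)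
    (hβN : ∀ ω, βN ω = Γ * (Γᵀ * Xᵀ * X * Γ)⁻¹ * Γᵀ * Xᵀ * Y ω) :
    (∀ i k, ∫ ω, βN ω i k ∂P = β i k) ∧
    ∫ ω, ((βN ω - β)ᵀ * Sx * (βN ω - β)).trace ∂P =
      ((n : ℝ)⁻¹) * Se.trace * (S⁻¹).trace := by
  have hnR : (n : ℝ) ≠ 0 := Nat.cast_ne_zero.mpr hn.ne'
  set M : Matrix (Fin u) (Fin u) ℝ := Γᵀ * Xᵀ * X * Γ with hM
  have hMS : M = (n : ℝ) • S := by
    rw [hS, smul_smul, mul_inv_cancel₀ hnR, one_smul]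
  have hMdet : IsUnit M.det := by
    rw [hMS, Matrix.det_smul]
    exact (isUnit_iff_ne_zero.mpr (pow_ne_zero _ hnR)).mul hSinv
  have hMinv : M⁻¹ * M = 1 := Matrix.nonsing_inv_mul M hMdet
  set A : Matrix (Fin p) (Fin n) ℝ := Γ * M⁻¹ * Γᵀ * Xᵀ with hA
  -- A * (X * β) = β
  have hAXβ : A * (X * β) = β := by
    have h1 : X * β = X * Γ * (Γᵀ * β) := by
      conv_lhs => rw [hβ]
      simp [Matrix.mul_assoc]
    have h2 : A * (X * β) = Γ * (M⁻¹ * (M * (Γᵀ * β))) := by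
      rw [h1, hA, hM]
      simp [Matrix.mul_assoc]
    rw [h2, ← Matrix.mul_assoc M⁻¹ M, hMinv, Matrix.one_mul, ← Matrix.mul_assoc, ← hβ]
  have hβN' : ∀ ω, βN ω = β + A * E ω := by
    intro ω
    rw [hβN ω, hY ω]
    have : Γ * M⁻¹ * Γᵀ * Xᵀ * (X * β + E ω) = A * (X * β + E ω) := by rw [hA]
    rw [this, Matrix.mul_add, hAXβ]
  have hInt : ∀ j k, Integrable (fun ω => E ω j k) P :=
    fun j k => (hL2 j k).integrable one_le_two
  have hmul : ∀ i j k l, Integrable (fun ω => E ω i k * E ω j l) P := by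
    intro i j k l
    have : MemLp ((fun ω => E ω i k) • (fun ω => E ω j l)) 1 P :=
      (hL2 j l).smul (hL2 i k) (hpqr := ⟨by rw [inv_one]; exact ENNReal.inv_two_add_inv_two⟩)
    exact memLp_one_iff_integrable.mp this
  constructor
  · -- unbiasedness
    intro i k
    have he : ∀ ω, βN ω i k = β i k + ∑ j, A i j * E ω j k := by
      intro ω
      rw [hβN' ω]
      simp [Matrix.add_apply, Matrix.mul_apply]
    simp_rw [he]
    rw [integral_add (integrable_const _)
        (integrable_finset_sum _ fun j _ => (hInt j k).const_mul _),
      integral_finset_sum _ fun j _ => (hInt j k).const_mul _]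
    simp [integral_const_mul, hmean]
  · -- risk
    set C : Matrix (Fin n) (Fin n) ℝ := Aᵀ * Sx * A with hC
    have hC2 : ∀ ω, ((βN ω - β)ᵀ * Sx * (βN ω - β)) = (E ω)ᵀ * C * E ω := by
      intro ω
      rw [hβN' ω, add_sub_cancel_left, hC]
      simp [Matrix.transpose_mul, Matrix.mul_assoc]
    have hpt : ∀ ω, ((E ω)ᵀ * C * E ω).trace
        = ∑ k, ∑ j, ∑ i, (E ω i k * C i j) * E ω j k := by
      intro ω
      simp [Matrix.trace, Matrix.diag, Matrix.mul_apply, Finset.sum_mul]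
    have hTermInt : ∀ i j k, Integrable (fun ω => (E ω i k * C i j) * E ω j k) P := by
      intro i j k
      exact ((hmul i j k k).const_mul (C i j)).congr
        (Filter.Eventually.of_forall fun ω => by ring)
    have hTermVal : ∀ i j k,
        ∫ ω, (E ω i k * C i j) * E ω j k ∂P
          = C i j * ((if i = j then (1:ℝ) else 0) * Se k k) := by
      intro i j k
      have h1 : ∀ ω, (E ω i k * C i j) * E ω j k = C i j * (E ω i k * E ω j k) :=
        fun ω => by ring
      simp_rw [h1]
      rw [integral_const_mul, hcov i j k k]
    have hrisk : ∫ ω, ((βN ω - β)ᵀ * Sx * (βN ω - β)).trace ∂P = Se.trace * C.trace := by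
      have h1 : ∀ ω, ((βN ω - β)ᵀ * Sx * (βN ω - β)).trace
          = ∑ k, ∑ j, ∑ i, (E ω i k * C i j) * E ω j k :=
        fun ω => by rw [hC2 ω]; exact hpt ω
      simp_rw [h1]
      rw [integral_finset_sum _ fun k _ => integrable_finset_sum _ fun j _ =>
        integrable_finset_sum _ fun i _ => hTermInt i j k]
      have h2 : ∀ k : Fin q, ∫ ω, (∑ j, ∑ i, (E ω i k * C i j) * E ω j k) ∂P
          = ∑ j, ∑ i, C i j * ((if i = j then (1:ℝ) else 0) * Se k k) := by
        intro k
        rw [integral_finset_sum _ fun j _ => integrable_finset_sum _ fun i _ => hTermInt i j k]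
        refine Finset.sum_congr rfl fun j _ => ?_
        rw [integral_finset_sum _ fun i _ => hTermInt i j k]
        exact Finset.sum_congr rfl fun i _ => hTermVal i j k
      simp_rw [h2]
      simp [mul_ite, ite_mul, Matrix.trace, Matrix.diag, Finset.mul_sum, Finset.sum_mul,
        mul_comm]
    rw [hrisk]
    -- compute trace C
    have hMsym : Mᵀ = M := by rw [hM]; simp [Matrix.transpose_mul, Matrix.mul_assoc]
    have hMinvT : (M⁻¹)ᵀ = M⁻¹ := by rw [Matrix.transpose_nonsing_inv, hMsym]
    have hΓSx : Γᵀ * Sx = Γᵀ := by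
      have h := congrArg Matrix.transpose hSxΓ
      rwa [Matrix.transpose_mul, hSx.eq] at h
    have hCform : C = (X * Γ) * (M⁻¹ * M⁻¹ * (Γᵀ * Xᵀ)) := by
      rw [hC, hA]
      have e1 : (Γ * M⁻¹ * Γᵀ * Xᵀ)ᵀ = X * Γ * M⁻¹ * Γᵀ := by
        simp [Matrix.transpose_mul, hMinvT, Matrix.mul_assoc]
      rw [e1]
      calc X * Γ * M⁻¹ * Γᵀ * Sx * (Γ * M⁻¹ * Γᵀ * Xᵀ)
          = X * Γ * M⁻¹ * (Γᵀ * Sx) * (Γ * M⁻¹ * Γᵀ * Xᵀ) := by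
            rw [Matrix.mul_assoc (X * Γ * M⁻¹) Γᵀ Sx]
        _ = X * Γ * M⁻¹ * Γᵀ * (Γ * M⁻¹ * Γᵀ * Xᵀ) := by rw [hΓSx]
        _ = X * Γ * (M⁻¹ * ((Γᵀ * Γ) * (M⁻¹ * (Γᵀ * Xᵀ)))) := by
            simp [Matrix.mul_assoc]
        _ = (X * Γ) * (M⁻¹ * M⁻¹ * (Γᵀ * Xᵀ)) := by
            rw [hΓ]; simp [Matrix.mul_assoc]
    have hCtr : C.trace = (M⁻¹).trace := by
      rw [hCform, Matrix.trace_mul_comm]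
      congr 1
      have e2 : Γᵀ * Xᵀ * (X * Γ) = M := by rw [hM]; simp [Matrix.mul_assoc]
      calc M⁻¹ * M⁻¹ * (Γᵀ * Xᵀ) * (X * Γ)
          = M⁻¹ * M⁻¹ * (Γᵀ * Xᵀ * (X * Γ)) := by rw [Matrix.mul_assoc]
        _ = M⁻¹ * (M⁻¹ * M) := by rw [e2, Matrix.mul_assoc]
        _ = M⁻¹ := by rw [hMinv, mul_one]
    have hSS : S * S⁻¹ = 1 := Matrix.mul_nonsing_inv S hSinv
    have hMinvS : M⁻¹ = (n : ℝ)⁻¹ • S⁻¹ := by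
      apply Matrix.inv_eq_right_inv
      rw [hMS, Matrix.smul_mul, Matrix.mul_smul, smul_smul, mul_inv_cancel₀ hnR, one_smul, hSS]
    rw [hCtr, hMinvS, Matrix.trace_smul, smul_eq_mul]
    ring
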